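/- arXiv:0708.3289 — 2 statements merged into one kernel-verified Lean document; each statement's English description precedes it below -/
import Mathlib

section
/- Let f ∈ L¹(ℝⁿ) and suppose there exist δ > 0, C₀ > 0, and α ∈ (0,1) such that ‖f(·−y) − f(·)‖_{L¹(ℝⁿ)} ≤ C₀|y|^α whenever |y| < δ. Then there exist C > 0 and ε₀ > 0 such that for all 0 < ε < ε₀ and all ξ ∈ ℝⁿ, the Fourier transform satisfies |F f(ξ)| ≤ C(exp(−πε²|ξ|²) + ε^α). -/
open MeasureTheory Real
open scoped FourierTransform RealInnerProductSpace

/-- Quantitative Riemann–Lebesgue: if the L¹-modulus of continuity of `f` is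
Hölder of order `α`, then the Fourier transform satisfies a two-parameter bound. -/
theorem fourier_decay_of_holder_modulus (n : ℕ) (f : EuclideanSpace ℝ (Fin n) → ℂ)
    (hf : Integrable f) (δ C₀ α : ℝ) (hδ : 0 < δ) (hC₀ : 0 < C₀)
    (hα : α ∈ Set.Ioo (0 : ℝ) 1)
    (hmod : ∀ y : EuclideanSpace ℝ (Fin n), ‖y‖ < δ →
      (∫ x, ‖f (x - y) - f x‖) ≤ C₀ * ‖y‖ ^ α) :
    ∃ C > 0, ∃ ε₀ > 0, ∀ ε : ℝ, 0 < ε → ε < ε₀ → ∀ ξ,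
      ‖𝓕 f ξ‖ ≤ C * (Real.exp (-π * ε ^ 2 * ‖ξ‖ ^ 2) + ε ^ α) := by
  obtain ⟨hα0, hα1⟩ := hα
  set I := ∫ x, ‖f x‖ with hI
  have hI0 : 0 ≤ I := integral_nonneg fun x => norm_nonneg _
  set C := Real.exp π * I + C₀ + 1 with hC
  have hCpos : 0 < C := by positivity
  refine ⟨C, hCpos, δ, hδ, ?_⟩
  intro ε hε hεδ ξ
  have hεα : 0 ≤ ε ^ α := Real.rpow_nonneg hε.le α
  by_cases hcase : ε * ‖ξ‖ ≤ 1
  · -- low-frequency case : use the trivial bound by the L¹ norm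
    have h1 : ‖𝓕 f ξ‖ ≤ I :=
      VectorFourier.norm_fourierIntegral_le_integral_norm _ _ _ _ _
    have hE : Real.exp (-π) ≤ Real.exp (-π * ε ^ 2 * ‖ξ‖ ^ 2) := by
      apply Real.exp_le_exp.2
      nlinarith [Real.pi_pos, mul_nonneg hε.le (norm_nonneg ξ),
        mul_nonneg (sub_nonneg.2 hcase) (by positivity : (0:ℝ) ≤ 1 + ε * ‖ξ‖)]
    have hEpos : 0 < Real.exp (-π * ε ^ 2 * ‖ξ‖ ^ 2) := Real.exp_pos _
    have h2 : I ≤ C * Real.exp (-π * ε ^ 2 * ‖ξ‖ ^ 2) := by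
      have hid : Real.exp π * Real.exp (-π) = 1 := by
        rw [← Real.exp_add]; simp
      have hle : Real.exp π * I ≤ C := by nlinarith
      calc I = (Real.exp π * I) * Real.exp (-π) := by rw [mul_assoc, mul_comm I, ← mul_assoc, hid, one_mul]
        _ ≤ (Real.exp π * I) * Real.exp (-π * ε ^ 2 * ‖ξ‖ ^ 2) := by
            exact mul_le_mul_of_nonneg_left hE (by positivity)
        _ ≤ C * Real.exp (-π * ε ^ 2 * ‖ξ‖ ^ 2) := by
            exact mul_le_mul_of_nonneg_right hle hEpos.le
    calc ‖𝓕 f ξ‖ ≤ I := h1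
      _ ≤ C * Real.exp (-π * ε ^ 2 * ‖ξ‖ ^ 2) := h2
      _ ≤ C * (Real.exp (-π * ε ^ 2 * ‖ξ‖ ^ 2) + ε ^ α) := by nlinarith
  · -- high-frequency case : use the modulus of continuity
    push_neg at hcase
    have hξ0 : ξ ≠ 0 := by
      intro h
      rw [h] at hcase
      simp at hcase
      linarith
    have hξpos : 0 < ‖ξ‖ := norm_pos_iff.2 hξ0
    set y : EuclideanSpace ℝ (Fin n) := (1 / (2 * ‖ξ‖ ^ 2) : ℝ) • ξ with hy
    have hynorm : ‖y‖ = 1 / (2 * ‖ξ‖) := by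
      rw [hy, norm_smul, Real.norm_eq_abs, abs_of_pos (by positivity)]
      field_simp
    have hylt : ‖y‖ < ε := by
      rw [hynorm, div_lt_iff₀ (by positivity)]
      nlinarith
    have hyδ : ‖y‖ < δ := hylt.trans hεδ
    -- the key half-period identity from mathlib
    have hkey := fourierIntegral_eq_half_sub_half_period_translate (f := f) hξ0 hf
    have heq : 𝓕 f ξ = (1 / (2 : ℂ)) •
        ∫ v, 𝐞 (-⟪v, ξ⟫) • (f v - f (v + y)) := by
      rw [Real.fourier_eq]
      exact hkey
    have hbound : ‖𝓕 f ξ‖ ≤ (1 / 2) * ∫ v, ‖f v - f (v + y)‖ := by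
      rw [heq, norm_smul]
      have h1 : ‖(1 / (2 : ℂ))‖ = 1 / 2 := by norm_num
      rw [h1]
      gcongr
      refine (norm_integral_le_integral_norm _).trans (le_of_eq ?_)
      congr 1
      ext v
      rw [Circle.norm_smul]
    have hflip : (∫ v, ‖f v - f (v + y)‖) = ∫ x, ‖f (x - (-y)) - f x‖ := by
      congr 1
      ext v
      rw [sub_neg_eq_add, norm_sub_rev]
    have hmody : (∫ x, ‖f (x - (-y)) - f x‖) ≤ C₀ * ‖(-y : EuclideanSpace ℝ (Fin n))‖ ^ α := by
      apply hmod
      rwa [norm_neg]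
    have hya : ‖(-y : EuclideanSpace ℝ (Fin n))‖ ^ α ≤ ε ^ α := by
      rw [norm_neg]
      exact Real.rpow_le_rpow (norm_nonneg _) hylt.le hα0.le
    have : ‖𝓕 f ξ‖ ≤ C₀ * ε ^ α := by
      calc ‖𝓕 f ξ‖ ≤ (1 / 2) * ∫ v, ‖f v - f (v + y)‖ := hbound
        _ = (1 / 2) * ∫ x, ‖f (x - (-y)) - f x‖ := by rw [hflip]
        _ ≤ (1 / 2) * (C₀ * ‖(-y : EuclideanSpace ℝ (Fin n))‖ ^ α) := by
            exact mul_le_mul_of_nonneg_left hmody (by norm_num)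
        _ ≤ (1 / 2) * (C₀ * ε ^ α) := by
            exact mul_le_mul_of_nonneg_left (mul_le_mul_of_nonneg_left hya hC₀.le) (by norm_num)
        _ ≤ C₀ * ε ^ α := by nlinarith
    calc ‖𝓕 f ξ‖ ≤ C₀ * ε ^ α := this
      _ ≤ C * ε ^ α := by
          apply mul_le_mul_of_nonneg_right _ hεα
          nlinarith [Real.exp_pos π]
      _ ≤ C * (Real.exp (-π * ε ^ 2 * ‖ξ‖ ^ 2) + ε ^ α) := by
          nlinarith [Real.exp_pos (-π * ε ^ 2 * ‖ξ‖ ^ 2)]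
end

section
/- Let Ω ⊂ ℝⁿ be a bounded domain with C¹ boundary and let f ∈ C^α(closure Ω) be α-Hölder continuous for some α ∈ (0,1). Let f̂ denote the extension of f by zero to all of ℝⁿ. Then there exist δ > 0 and C > 0 such that ‖f̂(·−y) − f̂(·)‖_{L¹(ℝⁿ)} ≤ C|y|^α for all y ∈ ℝⁿ with |y| ≤ δ. -/
open MeasureTheory Real

open Metric Set
open scoped ENNReal NNReal

/-- `Ω` has `C¹` boundary: near every boundary point the set is the sublevel set of a
`C¹` defining function with nonvanishing differential. -/
def HasC1Boundary {n : ℕ} (Ω : Set (EuclideanSpace ℝ (Fin n))) : Prop :=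
  ∀ x ∈ frontier Ω, ∃ U : Set (EuclideanSpace ℝ (Fin n)), IsOpen U ∧ x ∈ U ∧
    ∃ g : EuclideanSpace ℝ (Fin n) → ℝ, ContDiff ℝ 1 g ∧
      (∀ z ∈ U, fderiv ℝ g z ≠ 0) ∧
      Ω ∩ U = {z ∈ U | g z < 0} ∧
      frontier Ω ∩ U = {z ∈ U | g z = 0}

variable {n : ℕ}
local notation "E" => EuclideanSpace ℝ (Fin n)

lemma sublevel (g : E → ℝ) (hg : Continuous g) (p v : E) (ρ m ε : ℝ)
    (hρ : 0 < ρ) (hm : 0 < m) (hv : ‖v‖ ≤ 1) (hε : 0 < ε)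
    (hslope : ∀ x ∈ Metric.closedBall p ρ, ∀ t ∈ Set.Icc (0:ℝ) ρ,
      m / 2 * t ≤ g (x + t • v) - g x) :
    ENNReal.ofReal (m * ρ) * volume {x | x ∈ Metric.ball p ρ ∧ |g x| ≤ ε} ≤
      ENNReal.ofReal (10 * ε) * volume (Metric.ball p (2 * ρ)) := by
  set A : Set E := {x | x ∈ Metric.ball p ρ ∧ |g x| ≤ ε} with hA
  have hAmeas : MeasurableSet A := by
    have : A = Metric.ball p ρ ∩ (fun x => |g x|) ⁻¹' (Set.Iic ε) := by
      ext x; simp [hA, Set.mem_setOf_eq]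
    rw [this]
    exact measurableSet_ball.inter ((hg.abs.measurable) measurableSet_Iic)
  by_cases hcase : m * ρ ≤ 10 * ε
  · have hAsub : A ⊆ Metric.ball p (2 * ρ) := by
      intro x hx
      exact Metric.ball_subset_ball (by linarith) hx.1
    exact mul_le_mul' (ENNReal.ofReal_le_ofReal hcase) (measure_mono hAsub)
  · push_neg at hcase
    set τ : ℝ := 5 * ε / m with hτ
    have hτpos : 0 < τ := by positivity
    have hτρ : τ ≤ ρ / 2 := by
      rw [hτ, div_le_div_iff₀ hm (by norm_num)]
      nlinarith
    set Kn : ℕ := ⌊ρ / τ⌋₊ with hKn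
    have hK2 : 2 ≤ Kn := by
      rw [hKn]
      refine Nat.le_floor ?_
      rw [le_div_iff₀ hτpos]; push_cast; linarith
    have hKτ : (Kn : ℝ) * τ ≤ ρ := by
      rw [← le_div_iff₀ hτpos]
      exact Nat.floor_le (by positivity)
    -- translated copies
    set S : ℕ → Set E := fun j => (fun x : E => x + ((j : ℝ) * τ) • v) ⁻¹' A with hS
    have hjτ : ∀ j < Kn, (j : ℝ) * τ ≤ ρ := by
      intro j hj
      calc (j:ℝ) * τ ≤ (Kn:ℝ) * τ := by
            apply mul_le_mul_of_nonneg_right _ hτpos.le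
            exact_mod_cast hj.le
        _ ≤ ρ := hKτ
    have hSmeas : ∀ j, MeasurableSet (S j) :=
      fun j => hAmeas.preimage (measurable_id.add_const _)
    have hSvol : ∀ j, volume (S j) = volume A := by
      intro j
      exact measure_preimage_add_right volume _ A
    have hSsub : ∀ j < Kn, S j ⊆ Metric.ball p (2 * ρ) := by
      intro j hj x hx
      have h1 : x + ((j:ℝ) * τ) • v ∈ Metric.ball p ρ := hx.1
      have h2 : ‖((j:ℝ) * τ) • v‖ ≤ ρ := by
        rw [norm_smul]
        have : (0:ℝ) ≤ (j:ℝ) * τ := by positivity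
        rw [Real.norm_eq_abs, abs_of_nonneg this]
        calc (j:ℝ) * τ * ‖v‖ ≤ (j:ℝ) * τ * 1 := by
              apply mul_le_mul_of_nonneg_left hv this
          _ = (j:ℝ) * τ := mul_one _
          _ ≤ ρ := hjτ j hj
      rw [Metric.mem_ball] at h1 ⊢
      calc dist x p ≤ dist (x + ((j:ℝ) * τ) • v) p + ‖((j:ℝ)*τ) • v‖ := by
            rw [dist_eq_norm, dist_eq_norm]
            have : x - p = (x + ((j:ℝ)*τ) • v - p) - ((j:ℝ)*τ) • v := by abel
            rw [this]
            exact norm_sub_le _ _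
        _ < ρ + ρ := by linarith [h1]
        _ = 2 * ρ := by ring
    have hdisj : ∀ i < Kn, ∀ j < Kn, i ≠ j → Disjoint (S i) (S j) := by
      have key : ∀ i j, i < j → j < Kn → Disjoint (S i) (S j) := by
        intro i j hij hj
        rw [Set.disjoint_left]
        intro x hxi hxj
        set a := x + ((i:ℝ) * τ) • v with ha
        have haA : a ∈ A := hxi
        have ha'A : x + ((j:ℝ) * τ) • v ∈ A := hxj
        have hrw : x + ((j:ℝ) * τ) • v = a + (((j:ℝ) - i) * τ) • v := by
          rw [ha]; module
        have ht1 : τ ≤ ((j:ℝ) - i) * τ := by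
          have : (1:ℝ) ≤ (j:ℝ) - i := by
            have : (i:ℝ) + 1 ≤ j := by exact_mod_cast hij
            linarith
          nlinarith
        have ht2 : ((j:ℝ) - i) * τ ≤ ρ := by
          have : (j:ℝ) - i ≤ (Kn:ℝ) := by
            have := hj.le
            have : (j:ℝ) ≤ Kn := by exact_mod_cast hj.le
            have hi0 : (0:ℝ) ≤ i := Nat.cast_nonneg i
            linarith
          nlinarith
        have hslope' := hslope a (Metric.ball_subset_closedBall haA.1)
          (((j:ℝ) - i) * τ) ⟨by linarith, ht2⟩
        rw [← hrw] at hslope'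
        have h5 : m / 2 * τ ≤ m / 2 * (((j:ℝ) - i) * τ) := by
          apply mul_le_mul_of_nonneg_left ht1 (by positivity)
        have h6 : m / 2 * τ = 5 / 2 * ε := by
          rw [hτ]; field_simp
        have hga := abs_le.1 haA.2
        have hga' := abs_le.1 ha'A.2
        linarith
      intro i hi j hj hij
      rcases lt_or_gt_of_ne hij with h | h
      · exact key i j h hj
      · exact (key j i h hi).symm
    -- sum of measures
    have hsum : (Kn : ℝ≥0∞) * volume A ≤ volume (Metric.ball p (2 * ρ)) := by
      have hUnion : volume (⋃ j ∈ Finset.range Kn, S j) =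
          ∑ j ∈ Finset.range Kn, volume (S j) := by
        apply measure_biUnion_finset
        · intro i hi j hj hij
          exact hdisj i (Finset.mem_range.1 hi) j (Finset.mem_range.1 hj) hij
        · intro j _; exact hSmeas j
      have hUsub : (⋃ j ∈ Finset.range Kn, S j) ⊆ Metric.ball p (2 * ρ) := by
        intro x hx
        rcases Set.mem_iUnion₂.1 hx with ⟨j, hj, hxj⟩
        exact hSsub j (Finset.mem_range.1 hj) hxj
      calc (Kn : ℝ≥0∞) * volume A = ∑ j ∈ Finset.range Kn, volume (S j) := by
            simp [hSvol, Finset.sum_const, Finset.card_range, nsmul_eq_mul]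
        _ = volume (⋃ j ∈ Finset.range Kn, S j) := hUnion.symm
        _ ≤ volume (Metric.ball p (2 * ρ)) := measure_mono hUsub
    -- mρ ≤ 10 ε Kn
    have hmain : m * ρ ≤ 10 * ε * Kn := by
      have h2K : ρ ≤ 2 * Kn * τ := by
        have hK1 : ρ / τ ≤ Kn + 1 := (Nat.lt_floor_add_one _).le
        have hK2' : (1:ℝ) ≤ Kn := by
          have : (2:ℝ) ≤ Kn := by exact_mod_cast hK2
          linarith
        have : ρ ≤ (Kn + 1) * τ := by
          rw [div_le_iff₀ hτpos] at hK1; linarith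
        nlinarith
      have : m * ρ ≤ m * (2 * Kn * τ) := by nlinarith
      calc m * ρ ≤ m * (2 * Kn * τ) := this
        _ = 10 * ε * Kn := by rw [hτ]; field_simp; ring
    calc ENNReal.ofReal (m * ρ) * volume A
        ≤ ENNReal.ofReal (10 * ε * Kn) * volume A := by
          exact mul_le_mul' (ENNReal.ofReal_le_ofReal hmain) le_rfl
      _ = ENNReal.ofReal (10 * ε) * ((Kn : ℝ≥0∞) * volume A) := by
          rw [ENNReal.ofReal_mul (by positivity), ← mul_assoc]
          congr 1
          rw [ENNReal.ofReal_natCast]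
      _ ≤ ENNReal.ofReal (10 * ε) * volume (Metric.ball p (2 * ρ)) := by
          exact mul_le_mul' le_rfl hsum

lemma local_bound {Ω : Set (EuclideanSpace ℝ (Fin n))} (hΩbd : HasC1Boundary Ω)
    {p : EuclideanSpace ℝ (Fin n)} (hp : p ∈ frontier Ω) :
    ∃ ρ c : ℝ, 0 < ρ ∧ 0 ≤ c ∧ ∀ r : ℝ, 0 < r → r ≤ ρ →
      volume (Metric.ball p ρ ∩ Metric.thickening r (frontier Ω)) ≤
        ENNReal.ofReal (c * r) := by
  obtain ⟨U, hUopen, hpU, g, hg, hg', hΩU, hfrU⟩ := hΩbd p hp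
  set D := fderiv ℝ g p with hD
  have hDne : D ≠ 0 := hg' p hpU
  set m := ‖D‖ with hm
  have hmpos : 0 < m := norm_pos_iff.2 hDne
  -- choose direction v
  obtain ⟨v₀, hv₀, hv₀'⟩ := D.exists_lt_apply_of_lt_opNorm (show 3 * m / 4 < ‖D‖ by
    rw [← hm]; linarith)
  set v : EuclideanSpace ℝ (Fin n) := if 0 ≤ D v₀ then v₀ else -v₀ with hv
  have hvnorm : ‖v‖ ≤ 1 := by
    rw [hv]; split <;> simp [le_of_lt hv₀, norm_neg] <;> linarith
  have hvD : 3 * m / 4 < D v := by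
    rw [hv]; split_ifs with h
    · rwa [Real.norm_eq_abs, abs_of_nonneg h] at hv₀'
    · rw [map_neg]
      rw [Real.norm_eq_abs, abs_of_neg (lt_of_not_ge h)] at hv₀'
      linarith
  -- choose radius
  have hcont : Continuous (fderiv ℝ g) := hg.continuous_fderiv one_ne_zero
  have hopen : IsOpen {z : EuclideanSpace ℝ (Fin n) | ‖fderiv ℝ g z - D‖ < m / 4} := by
    have : Continuous fun z => ‖fderiv ℝ g z - D‖ := (hcont.sub continuous_const).norm
    exact isOpen_lt this continuous_const
  have hmem : p ∈ U ∩ {z | ‖fderiv ℝ g z - D‖ < m / 4} := by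
    refine ⟨hpU, ?_⟩
    show ‖fderiv ℝ g p - D‖ < m / 4
    rw [← hD, sub_self, norm_zero]; positivity
  obtain ⟨R, hRpos, hRsub⟩ := Metric.isOpen_iff.1 (hUopen.inter hopen) p hmem
  set ρ := R / 3 with hρdef
  have hρpos : 0 < ρ := by positivity
  clear_value ρ
  have hball2 : Metric.closedBall p (2 * ρ) ⊆ U ∩ {z | ‖fderiv ℝ g z - D‖ < m / 4} := by
    refine subset_trans ?_ hRsub
    intro x hx
    rw [Metric.mem_closedBall] at hx
    rw [Metric.mem_ball]
    rw [hρdef] at hx; linarith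
  -- derivative bound on the ball
  have hderiv : ∀ z ∈ Metric.closedBall p (2 * ρ), ‖fderiv ℝ g z - D‖ ≤ m / 4 :=
    fun z hz => le_of_lt (hball2 hz).2
  -- slope estimate
  have hslope : ∀ x ∈ Metric.closedBall p ρ, ∀ t ∈ Set.Icc (0:ℝ) ρ,
      m / 2 * t ≤ g (x + t • v) - g x := by
    intro x hx t ht
    have hxt : x + t • v ∈ Metric.closedBall p (2 * ρ) := by
      rw [Metric.mem_closedBall] at hx ⊢
      calc dist (x + t • v) p ≤ dist x p + ‖t • v‖ := by
            rw [dist_eq_norm, dist_eq_norm]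
            have : x + t • v - p = (x - p) + t • v := by abel
            rw [this]; exact norm_add_le _ _
        _ ≤ ρ + t * 1 := by
            rw [norm_smul, Real.norm_eq_abs, abs_of_nonneg ht.1]
            exact add_le_add hx (mul_le_mul_of_nonneg_left hvnorm ht.1)
        _ ≤ 2 * ρ := by linarith [ht.2]
    have hx2 : x ∈ Metric.closedBall p (2 * ρ) :=
      Metric.closedBall_subset_closedBall (by linarith) hx
    -- mean value for φ z = g z - D z
    set φ : (EuclideanSpace ℝ (Fin n)) → ℝ := fun z => g z - D z with hφ
    have hgdiff : ∀ z, DifferentiableAt ℝ g z := fun z => (hg.differentiable one_ne_zero) z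
    have hφdiff : ∀ z ∈ Metric.closedBall p (2*ρ), DifferentiableAt ℝ φ z :=
      fun z _ => (hgdiff z).sub (D.differentiableAt)
    have hφderiv : ∀ z ∈ Metric.closedBall p (2*ρ), ‖fderiv ℝ φ z‖ ≤ m / 4 := by
      intro z hz
      have : fderiv ℝ φ z = fderiv ℝ g z - D := by
        rw [hφ]
        rw [fderiv_fun_sub (hgdiff z) D.differentiableAt, D.fderiv]
      rw [this]; exact hderiv z hz
    have hmv := (convex_closedBall p (2*ρ)).norm_image_sub_le_of_norm_fderiv_le
      hφdiff hφderiv hx2 hxt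
    have hval : φ (x + t • v) - φ x = g (x + t • v) - g x - t * D v := by
      simp only [hφ, map_add, ContinuousLinearMap.map_smul, smul_eq_mul]; ring
    have hnorm : ‖x + t • v - x‖ ≤ t := by
      simp only [add_sub_cancel_left, norm_smul, Real.norm_eq_abs, abs_of_nonneg ht.1]
      calc t * ‖v‖ ≤ t * 1 := mul_le_mul_of_nonneg_left hvnorm ht.1
        _ = t := mul_one t
    rw [hval] at hmv
    have h1 : |g (x + t • v) - g x - t * D v| ≤ m / 4 * t := by
      calc |g (x + t • v) - g x - t * D v| ≤ m / 4 * ‖x + t • v - x‖ := hmv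
        _ ≤ m / 4 * t := mul_le_mul_of_nonneg_left hnorm (by positivity)
    have h2 := abs_le.1 h1
    have h3 : 3 * m / 4 * t ≤ t * D v := by
      rcases eq_or_lt_of_le ht.1 with h | h
      · simp [← h]
      · nlinarith
    linarith
  -- Lipschitz bound on the ball
  have hlip : ∀ x ∈ Metric.closedBall p (2*ρ), ∀ q ∈ Metric.closedBall p (2*ρ),
      |g x - g q| ≤ 5 * m / 4 * ‖x - q‖ := by
    intro x hx q hq
    have hgdiff : ∀ z ∈ Metric.closedBall p (2*ρ), DifferentiableAt ℝ g z :=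
      fun z _ => (hg.differentiable one_ne_zero) z
    have hbd : ∀ z ∈ Metric.closedBall p (2*ρ), ‖fderiv ℝ g z‖ ≤ 5 * m / 4 := by
      intro z hz
      calc ‖fderiv ℝ g z‖ = ‖(fderiv ℝ g z - D) + D‖ := by rw [sub_add_cancel]
        _ ≤ ‖fderiv ℝ g z - D‖ + ‖D‖ := norm_add_le _ _
        _ ≤ m / 4 + m := add_le_add (hderiv z hz) (le_of_eq hm.symm)
        _ = 5 * m / 4 := by ring
    exact (convex_closedBall p (2*ρ)).norm_image_sub_le_of_norm_fderiv_le hgdiff hbd hq hx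
  -- conclusion
  set V := (volume (Metric.ball p (2 * ρ))).toReal with hV
  clear_value V
  have hVfin : volume (Metric.ball p (2 * ρ)) < ⊤ := measure_ball_lt_top
  have hVnn : (0:ℝ) ≤ V := hV ▸ ENNReal.toReal_nonneg
  refine ⟨ρ, 25 * V / (2 * ρ), hρpos, div_nonneg (by linarith) (by linarith), ?_⟩
  intro r hr hrρ
  have hsub : Metric.ball p ρ ∩ Metric.thickening r (frontier Ω) ⊆
      {x | x ∈ Metric.ball p ρ ∧ |g x| ≤ 5 * m / 4 * r} := by
    rintro x ⟨hx1, hx2⟩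
    refine ⟨hx1, ?_⟩
    obtain ⟨q, hqF, hqd⟩ := Metric.mem_thickening_iff.1 hx2
    have hq2 : q ∈ Metric.closedBall p (2 * ρ) := by
      rw [Metric.mem_closedBall]
      calc dist q p ≤ dist q x + dist x p := dist_triangle _ _ _
        _ ≤ r + ρ := by
            rw [Metric.mem_ball] at hx1
            rw [dist_comm] at hqd
            exact add_le_add hqd.le hx1.le
        _ ≤ 2 * ρ := by linarith
    have hqU : q ∈ U := (hball2 hq2).1
    have hgq : g q = 0 := by
      have : q ∈ frontier Ω ∩ U := ⟨hqF, hqU⟩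
      rw [hfrU] at this
      exact this.2
    have hx2' : x ∈ Metric.closedBall p (2 * ρ) :=
      Metric.closedBall_subset_closedBall (by linarith) (Metric.ball_subset_closedBall hx1)
    calc |g x| = |g x - g q| := by rw [hgq, sub_zero]
      _ ≤ 5 * m / 4 * ‖x - q‖ := hlip x hx2' q hq2
      _ ≤ 5 * m / 4 * r := by
          apply mul_le_mul_of_nonneg_left _ (by positivity)
          rw [← dist_eq_norm]; exact hqd.le
  have hkey := sublevel (n := n) g (hg.continuous) p v ρ m (5 * m / 4 * r)
    hρpos hmpos hvnorm (by positivity) hslope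
  have hmono : volume (Metric.ball p ρ ∩ Metric.thickening r (frontier Ω)) ≤
      volume {x | x ∈ Metric.ball p ρ ∧ |g x| ≤ 5 * m / 4 * r} := measure_mono hsub
  have hfin : ENNReal.ofReal (m * ρ) ≠ 0 := (ENNReal.ofReal_pos.2 (by positivity)).ne'
  have h10 : (10 : ℝ) * (5 * m / 4 * r) = 25 * m / 2 * r := by ring
  -- divide
  have hdiv : volume {x | x ∈ Metric.ball p ρ ∧ |g x| ≤ 5 * m / 4 * r} ≤
      ENNReal.ofReal (25 * m / 2 * r) * volume (Metric.ball p (2 * ρ)) /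
        ENNReal.ofReal (m * ρ) := by
    rw [ENNReal.le_div_iff_mul_le (Or.inl hfin) (Or.inl ENNReal.ofReal_ne_top)]
    rw [mul_comm]
    rw [← h10]
    exact hkey
  refine le_trans (le_trans hmono hdiv) ?_
  rw [← ENNReal.ofReal_toReal hVfin.ne, ← hV, ← ENNReal.ofReal_mul (by positivity),
    ← ENNReal.ofReal_div_of_pos (by positivity)]
  apply ENNReal.ofReal_le_ofReal
  rw [div_le_iff₀ (by positivity : (0:ℝ) < m * ρ)]
  have hρne : ρ ≠ 0 := ne_of_gt hρpos
  have heq : 25 * V / (2 * ρ) * r * (m * ρ) = 25 * m * r * V / 2 := by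
    field_simp
  rw [heq]
  exact le_of_eq (by ring)

lemma tubular {Ω : Set (EuclideanSpace ℝ (Fin n))} (hΩbdd : Bornology.IsBounded Ω)
    (hΩbd : HasC1Boundary Ω) :
    ∃ r₀ c : ℝ, 0 < r₀ ∧ 0 ≤ c ∧ ∀ r : ℝ, 0 < r → r ≤ r₀ →
      volume (Metric.thickening r (frontier Ω)) ≤ ENNReal.ofReal (c * r) := by
  have hF : IsCompact (frontier Ω) := by
    apply Metric.isCompact_of_isClosed_isBounded isClosed_frontier
    exact (hΩbdd.closure).subset (frontier_subset_closure)
  choose! ρ c hρ hc hbound using fun p (hp : p ∈ frontier Ω) => local_bound hΩbd hp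
  -- finite subcover
  obtain ⟨t, htsub, htfin, htcov⟩ :=
    hF.elim_finite_subcover_image (b := frontier Ω)
      (c := fun p => Metric.ball p (ρ p / 2))
      (fun p _ => Metric.isOpen_ball)
      (fun x hx => Set.mem_biUnion hx (Metric.mem_ball_self (half_pos (hρ x hx))))
  rcases Set.eq_empty_or_nonempty t with ht | ht
  · -- frontier is empty
    subst ht
    have : frontier Ω = ∅ := by
      rw [Set.biUnion_empty] at htcov
      exact Set.subset_empty_iff.1 htcov
    refine ⟨1, 0, one_pos, le_refl 0, ?_⟩
    intro r hr hr1
    rw [this, Metric.thickening_empty]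
    simp
  · lift t to Finset (EuclideanSpace ℝ (Fin n)) using htfin
    have htne : t.Nonempty := by
      rcases ht with ⟨x, hx⟩
      exact ⟨x, by exact_mod_cast hx⟩
    set r₀ : ℝ := t.inf' htne (fun p => ρ p / 2) with hr₀
    have hr₀pos : 0 < r₀ := by
      rw [hr₀, Finset.lt_inf'_iff]
      intro p hp
      exact half_pos (hρ p (htsub (by exact_mod_cast hp)))
    set C : ℝ := ∑ p ∈ t, c p with hC
    have hCnn : 0 ≤ C := Finset.sum_nonneg fun p hp => hc p (htsub (by exact_mod_cast hp))
    refine ⟨r₀, C, hr₀pos, hCnn, ?_⟩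
    intro r hr hrr₀
    have hcov : Metric.thickening r (frontier Ω) ⊆
        ⋃ p ∈ t, (Metric.ball p (ρ p) ∩ Metric.thickening r (frontier Ω)) := by
      intro x hx
      obtain ⟨q, hqF, hqd⟩ := Metric.mem_thickening_iff.1 hx
      have := htcov hqF
      rcases Set.mem_iUnion₂.1 this with ⟨p, hpt, hqp⟩
      have hpt' : p ∈ t := by exact_mod_cast hpt
      refine Set.mem_iUnion₂.2 ⟨p, hpt', ⟨?_, hx⟩⟩
      rw [Metric.mem_ball] at hqp ⊢
      have hr₀le : r₀ ≤ ρ p / 2 := Finset.inf'_le _ hpt'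
      calc dist x p ≤ dist x q + dist q p := dist_triangle _ _ _
        _ < r + ρ p / 2 := add_lt_add_of_lt_of_lt hqd hqp
        _ ≤ ρ p := by linarith [le_trans hrr₀ hr₀le]
    calc volume (Metric.thickening r (frontier Ω))
        ≤ ∑ p ∈ t, volume (Metric.ball p (ρ p) ∩ Metric.thickening r (frontier Ω)) :=
          le_trans (measure_mono hcov) (measure_biUnion_finset_le t _)
      _ ≤ ∑ p ∈ t, ENNReal.ofReal (c p * r) := by
          apply Finset.sum_le_sum
          intro p hp
          have hpF : p ∈ frontier Ω := htsub (by exact_mod_cast hp)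
          have hr₀le : r₀ ≤ ρ p / 2 := Finset.inf'_le _ hp
          exact hbound p hpF r hr (by linarith [hρ p hpF, le_trans hrr₀ hr₀le])
      _ = ENNReal.ofReal (C * r) := by
          rw [← ENNReal.ofReal_sum_of_nonneg]
          · rw [hC, Finset.sum_mul]
          · intro p hp
            exact mul_nonneg (hc p (htsub (by exact_mod_cast hp))) hr.le

lemma frontier_cross {Ω : Set (EuclideanSpace ℝ (Fin n))} (hΩopen : IsOpen Ω)
    (a b : EuclideanSpace ℝ (Fin n)) (ha : a ∈ Ω) (hb : b ∉ Ω) :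
    ∃ q ∈ frontier Ω, dist a q ≤ dist a b ∧ dist b q ≤ dist a b := by
  have hseg : ∀ q ∈ segment ℝ a b, dist a q ≤ dist a b ∧ dist b q ≤ dist a b := by
    intro q hq
    constructor
    · have : segment ℝ a b ⊆ Metric.closedBall a (dist a b) :=
        (convex_closedBall a (dist a b)).segment_subset
          (Metric.mem_closedBall_self dist_nonneg)
          (by rw [Metric.mem_closedBall, dist_comm])
      have := this hq
      rwa [Metric.mem_closedBall, dist_comm] at this
    · have : segment ℝ a b ⊆ Metric.closedBall b (dist a b) :=
        (convex_closedBall b (dist a b)).segment_subset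
          (by rw [Metric.mem_closedBall, dist_comm])
          (Metric.mem_closedBall_self dist_nonneg)
      have := this hq
      rwa [Metric.mem_closedBall, dist_comm] at this
  suffices h : ∃ q ∈ segment ℝ a b, q ∈ frontier Ω by
    obtain ⟨q, hq1, hq2⟩ := h
    exact ⟨q, hq2, hseg q hq1⟩
  by_contra hcon
  push_neg at hcon
  have hsub : segment ℝ a b ⊆ Ω ∪ (closure Ω)ᶜ := by
    intro z hz
    by_cases h1 : z ∈ Ω
    · exact Or.inl h1
    · by_cases h2 : z ∈ closure Ω
      · exfalso
        exact hcon z hz (by rw [hΩopen.frontier_eq]; exact ⟨h2, h1⟩)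
      · exact Or.inr h2
  have hpc := (convex_segment a b).isPreconnected
  have hbv : b ∈ (closure Ω)ᶜ := by
    intro hbc
    exact hcon b (right_mem_segment ℝ a b) (by rw [hΩopen.frontier_eq]; exact ⟨hbc, hb⟩)
  obtain ⟨z, hz, hz1, hz2⟩ := hpc Ω (closure Ω)ᶜ hΩopen isClosed_closure.isOpen_compl hsub
    ⟨a, left_mem_segment ℝ a b, ha⟩ ⟨b, right_mem_segment ℝ a b, hbv⟩
  exact hz2 (subset_closure hz1)

/-- The zero extension of an `α`-Hölder function on a bounded `C¹` domain has an
`α`-Hölder `L¹`-modulus of continuity. -/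
theorem holder_modulus_of_zero_extension (n : ℕ) (Ω : Set (EuclideanSpace ℝ (Fin n)))
    (hΩopen : IsOpen Ω) (hΩbdd : Bornology.IsBounded Ω) (hΩconn : IsConnected Ω)
    (hΩbd : HasC1Boundary Ω) (f : EuclideanSpace ℝ (Fin n) → ℝ) (α K : ℝ)
    (hα : α ∈ Set.Ioo (0 : ℝ) 1) (hK : 0 ≤ K)
    (hf : ∀ x ∈ closure Ω, ∀ z ∈ closure Ω, |f x - f z| ≤ K * ‖x - z‖ ^ α) :
    ∃ δ > 0, ∃ C > 0, ∀ y : EuclideanSpace ℝ (Fin n), ‖y‖ ≤ δ →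
      (∫ x, |Ω.indicator f (x - y) - Ω.indicator f x|) ≤ C * ‖y‖ ^ α := by
  classical
  obtain ⟨x₀, hx₀⟩ := hΩconn.nonempty
  obtain ⟨R, hRpos, hRsub⟩ := (hΩbdd.closure).subset_closedBall_lt 0 x₀
  -- uniform bound M on |f| over closure Ω
  set M : ℝ := |f x₀| + K * R ^ α with hM
  have hMnn : 0 ≤ M := by
    have : (0:ℝ) ≤ K * R ^ α := mul_nonneg hK (Real.rpow_nonneg hRpos.le α)
    positivity
  have hfM : ∀ x ∈ closure Ω, |f x| ≤ M := by
    intro x hx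
    have h1 : |f x - f x₀| ≤ K * ‖x - x₀‖ ^ α := hf x hx x₀ (subset_closure hx₀)
    have h2 : ‖x - x₀‖ ≤ R := by
      have := hRsub hx
      rw [Metric.mem_closedBall] at this
      rwa [← dist_eq_norm]
    have h3 : ‖x - x₀‖ ^ α ≤ R ^ α := Real.rpow_le_rpow (norm_nonneg _) h2 hα.1.le
    calc |f x| ≤ |f x - f x₀| + |f x₀| := by
          have := abs_add_le (f x - f x₀) (f x₀); simpa using this
      _ ≤ K * R ^ α + |f x₀| := add_le_add (le_trans h1 (mul_le_mul_of_nonneg_left h3 hK)) le_rfl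
      _ = M := by rw [hM]; ring
  -- tubular bound
  obtain ⟨r₀, cT, hr₀, hcT, htub⟩ := tubular hΩbdd hΩbd
  -- measurability of the indicator extension
  have hfc : ContinuousOn f (closure Ω) := by
    intro x hx
    rw [ContinuousWithinAt, ← tendsto_sub_nhds_zero_iff]
    have h1 : ∀ᶠ z in nhdsWithin x (closure Ω), ‖f z - f x‖ ≤ K * ‖z - x‖ ^ α := by
      filter_upwards [self_mem_nhdsWithin] with z hz
      rw [Real.norm_eq_abs]
      exact hf z hz x hx
    have hcont : Continuous fun z : EuclideanSpace ℝ (Fin n) => K * ‖z - x‖ ^ α := by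
      apply continuous_const.mul
      apply Continuous.rpow_const (continuous_id.sub continuous_const).norm
      intro z
      exact Or.inr hα.1.le
    have h2 : Filter.Tendsto (fun z => K * ‖z - x‖ ^ α) (nhdsWithin x (closure Ω)) (nhds 0) := by
      have := hcont.tendsto x
      simp only [sub_self, norm_zero, Real.zero_rpow (ne_of_gt hα.1), mul_zero] at this
      exact this.mono_left nhdsWithin_le_nhds
    exact squeeze_zero_norm' h1 h2
  have hFmeas : Measurable (Ω.indicator f) := by
    have heq : Ω.indicator f = Ω.piecewise f (fun _ => 0) := by
      funext x; by_cases h : x ∈ Ω <;> simp [h]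
    rw [heq]
    exact ContinuousOn.measurable_piecewise (hfc.mono subset_closure)
      continuousOn_const hΩopen.measurableSet
  have hΩmeas : MeasurableSet Ω := hΩopen.measurableSet
  have hΩfin : volume Ω < ⊤ := by
    apply lt_of_le_of_lt (measure_mono (subset_trans subset_closure hRsub))
    exact measure_closedBall_lt_top
  set VΩ : ℝ := (volume Ω).toReal with hVΩ
  have hVΩnn : 0 ≤ VΩ := ENNReal.toReal_nonneg
  refine ⟨min 1 (r₀ / 2), lt_min one_pos (by positivity), K * VΩ + 2 * M * cT + 1, by positivity, ?_⟩
  intro y hy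
  by_cases hy0 : y = 0
  · subst hy0
    simp only [sub_zero, sub_self, abs_zero, integral_zero, norm_zero]
    rw [Real.zero_rpow (ne_of_gt hα.1), mul_zero]
  have hynorm : 0 < ‖y‖ := norm_pos_iff.2 hy0
  have hy1 : ‖y‖ ≤ 1 := le_trans hy (min_le_left _ _)
  have hyr₀ : 2 * ‖y‖ ≤ r₀ := by
    have := le_trans hy (min_le_right _ _); linarith
  set T : Set (EuclideanSpace ℝ (Fin n)) := Metric.thickening (2 * ‖y‖) (frontier Ω) with hT
  have hTmeas : MeasurableSet T := Metric.isOpen_thickening.measurableSet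
  have hTvol : volume T ≤ ENNReal.ofReal (cT * (2 * ‖y‖)) := htub _ (by positivity) hyr₀
  have hTfin : volume T < ⊤ := lt_of_le_of_lt hTvol ENNReal.ofReal_lt_top
  -- pointwise bound
  set B : (EuclideanSpace ℝ (Fin n)) → ℝ :=
    fun x => Ω.indicator (fun _ => K * ‖y‖ ^ α) x + T.indicator (fun _ => M) x with hB
  have hyα : (0:ℝ) ≤ K * ‖y‖ ^ α := mul_nonneg hK (Real.rpow_nonneg (norm_nonneg _) _)
  have hBnn : ∀ x, 0 ≤ B x := by
    intro x
    apply add_nonneg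
    · exact Set.indicator_nonneg (fun _ _ => hyα) x
    · exact Set.indicator_nonneg (fun _ _ => hMnn) x
  have hmemT : ∀ x : EuclideanSpace ℝ (Fin n), (x ∈ Ω ∧ x - y ∉ Ω) ∨ (x ∉ Ω ∧ x - y ∈ Ω) → x ∈ T := by
    rintro x (⟨h1, h2⟩ | ⟨h1, h2⟩)
    · obtain ⟨q, hq, hd, _⟩ := frontier_cross hΩopen x (x - y) h1 h2
      rw [hT]
      apply Metric.mem_thickening_iff.2
      refine ⟨q, hq, lt_of_le_of_lt hd ?_⟩
      rw [dist_eq_norm]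
      have : x - (x - y) = y := by abel
      rw [this]; linarith
    · obtain ⟨q, hq, _, hd⟩ := frontier_cross hΩopen (x - y) x h2 h1
      rw [hT]
      apply Metric.mem_thickening_iff.2
      refine ⟨q, hq, lt_of_le_of_lt hd ?_⟩
      rw [dist_eq_norm]
      have : x - y - x = -y := by abel
      rw [this, norm_neg]; linarith
  have hpt : ∀ x, |Ω.indicator f (x - y) - Ω.indicator f x| ≤ B x := by
    intro x
    by_cases h1 : x ∈ Ω <;> by_cases h2 : x - y ∈ Ω
    · rw [Set.indicator_of_mem h1, Set.indicator_of_mem h2]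
      have hfb : |f (x - y) - f x| ≤ K * ‖y‖ ^ α := by
        have := hf (x - y) (subset_closure h2) x (subset_closure h1)
        have heq : x - y - x = -y := by abel
        rwa [heq, norm_neg] at this
      calc |f (x - y) - f x| ≤ K * ‖y‖ ^ α := hfb
        _ = Ω.indicator (fun _ => K * ‖y‖ ^ α) x + 0 := by
            rw [Set.indicator_of_mem h1]; ring
        _ ≤ B x := by
            rw [hB]
            exact add_le_add le_rfl (Set.indicator_nonneg (fun _ _ => hMnn) x)
    · rw [Set.indicator_of_mem h1, Set.indicator_of_notMem h2]
      have hxT : x ∈ T := hmemT x (Or.inl ⟨h1, h2⟩)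
      calc |0 - f x| = |f x| := by rw [zero_sub, abs_neg]
        _ ≤ M := hfM x (subset_closure h1)
        _ ≤ B x := by
            simp only [hB]
            have h2' : T.indicator (fun _ => M) x = M := Set.indicator_of_mem hxT _
            rw [h2']
            exact le_add_of_nonneg_left (Set.indicator_nonneg (fun _ _ => hyα) x)
    · rw [Set.indicator_of_notMem h1, Set.indicator_of_mem h2]
      have hxT : x ∈ T := hmemT x (Or.inr ⟨h1, h2⟩)
      calc |f (x - y) - 0| = |f (x - y)| := by rw [sub_zero]
        _ ≤ M := hfM _ (subset_closure h2)
        _ ≤ B x := by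
            simp only [hB]
            have h2' : T.indicator (fun _ => M) x = M := Set.indicator_of_mem hxT _
            rw [h2']
            exact le_add_of_nonneg_left (Set.indicator_nonneg (fun _ _ => hyα) x)
    · rw [Set.indicator_of_notMem h1, Set.indicator_of_notMem h2]
      simpa using hBnn x
  -- integrability
  have hBint : Integrable B := by
    apply Integrable.add
    · rw [integrable_indicator_iff hΩmeas]
      exact integrableOn_const hΩfin.ne
    · rw [integrable_indicator_iff hTmeas]
      exact integrableOn_const hTfin.ne
  have hhmeas : Measurable fun x => |Ω.indicator f (x - y) - Ω.indicator f x| := by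
    apply Measurable.abs
    exact (hFmeas.comp (measurable_id.sub_const y)).sub hFmeas
  have hhint : Integrable fun x => |Ω.indicator f (x - y) - Ω.indicator f x| := by
    apply Integrable.mono' hBint hhmeas.aestronglyMeasurable
    filter_upwards with x
    rw [Real.norm_eq_abs, abs_abs]
    exact hpt x
  have hle : (∫ x, |Ω.indicator f (x - y) - Ω.indicator f x|) ≤ ∫ x, B x :=
    integral_mono hhint hBint hpt
  have hBval : (∫ x, B x) = K * ‖y‖ ^ α * VΩ + M * (volume T).toReal := by
    rw [hB]
    rw [integral_add]
    · rw [integral_indicator hΩmeas, integral_indicator hTmeas,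
        setIntegral_const, setIntegral_const]
      simp only [smul_eq_mul]
      rw [hVΩ]; simp only [measureReal_def]; ring
    · rw [integrable_indicator_iff hΩmeas]
      exact integrableOn_const hΩfin.ne
    · rw [integrable_indicator_iff hTmeas]
      exact integrableOn_const hTfin.ne
  have hTtoReal : (volume T).toReal ≤ cT * (2 * ‖y‖) :=
    ENNReal.toReal_le_of_le_ofReal (by positivity) hTvol
  have hyle : ‖y‖ ≤ ‖y‖ ^ α := by
    nth_rewrite 1 [← Real.rpow_one ‖y‖]
    exact Real.rpow_le_rpow_of_exponent_ge hynorm hy1 hα.2.le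
  have hyαnn : (0:ℝ) ≤ ‖y‖ ^ α := Real.rpow_nonneg (norm_nonneg _) _
  calc (∫ x, |Ω.indicator f (x - y) - Ω.indicator f x|)
      ≤ K * ‖y‖ ^ α * VΩ + M * (volume T).toReal := le_trans hle (le_of_eq hBval)
    _ ≤ K * ‖y‖ ^ α * VΩ + M * (cT * (2 * ‖y‖)) :=
        add_le_add le_rfl (mul_le_mul_of_nonneg_left hTtoReal hMnn)
    _ ≤ K * ‖y‖ ^ α * VΩ + M * (cT * (2 * ‖y‖ ^ α)) := by
        apply add_le_add le_rfl
        apply mul_le_mul_of_nonneg_left _ hMnn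
        apply mul_le_mul_of_nonneg_left _ hcT
        linarith
    _ = (K * VΩ + 2 * M * cT) * ‖y‖ ^ α := by ring
    _ ≤ (K * VΩ + 2 * M * cT + 1) * ‖y‖ ^ α := by nlinarith
end
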